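/- Let f and g be nonzero rational functions in ℂ(z) such that ord_∞(f) = ord_∞(g) = 0 and such that no point a ∈ ℂ is simultaneously a zero or pole of f and a zero or pole of g. Then ∑_{a ∈ ℂ, ord_a(g) ≠ 0} ord_a(g) · log|f(a)| = ∑_{b ∈ ℂ, ord_b(f) ≠ 0} ord_b(f) · log|g(b)|, where both sums are finite and all evaluations f(a), g(b) are well-defined nonzero complex numbers (so the logarithms of their absolute values are defined). -/

import Mathlib

open Polynomial

/-- The order of vanishing of a nonzero rational function `f ∈ ℂ(z)` at a point `a ∈ ℂ`:
the multiplicity of `a` as a root of the numerator minus its multiplicity as a root of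
the denominator. -/
noncomputable def ordAt (f : RatFunc ℂ) (a : ℂ) : ℤ :=
  (Polynomial.rootMultiplicity a f.num : ℤ) - (Polynomial.rootMultiplicity a f.denom : ℤ)

/-- The order of vanishing of a rational function at infinity:
`deg(denominator) − deg(numerator)`. -/
noncomputable def ordInf (f : RatFunc ℂ) : ℤ :=
  (f.denom.natDegree : ℤ) - (f.num.natDegree : ℤ)

/-- Evaluation of a rational function at a point of `ℂ`. -/
noncomputable def evalAt (f : RatFunc ℂ) (a : ℂ) : ℂ :=
  RatFunc.eval (RingHom.id ℂ) a f

/-- The finite set of zeros and poles of a rational function. -/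
noncomputable def suppF (f : RatFunc ℂ) : Finset ℂ := (f.num * f.denom).roots.toFinset

theorem log_abs_eval (p : ℂ[X]) (hp : p ≠ 0) (a : ℂ) (ha : p.eval a ≠ 0) :
    Real.log (‖p.eval a‖) = Real.log (‖p.leadingCoeff‖)
      + ∑ b ∈ p.roots.toFinset, (p.rootMultiplicity b : ℝ) * Real.log (‖a - b‖) := by
  have hsp : p.Splits := IsAlgClosed.splits p
  have h1 : p.eval a = p.leadingCoeff * ((p.roots.map (fun r => a - r)).prod) := by
    conv_lhs => rw [hsp.eq_prod_roots]
    simp [eval_multiset_prod, Multiset.map_map, Function.comp]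
  have h2 : (p.roots.map (fun r => a - r)).prod
      = ∏ b ∈ p.roots.toFinset, (a - b) ^ p.roots.count b :=
    Finset.prod_multiset_map_count _ _
  have hab : ∀ b ∈ p.roots.toFinset, a - b ≠ 0 := by
    intro b hb hab
    apply ha
    have : a = b := by linear_combination hab
    rw [this]
    exact (isRoot_of_mem_roots (Multiset.mem_toFinset.mp hb))
  have habs : ∀ b ∈ p.roots.toFinset, ‖(a - b) ^ p.roots.count b‖ ≠ 0 := by
    intro b hb
    exact norm_ne_zero_iff.mpr (pow_ne_zero _ (hab b hb))
  rw [h1, h2, norm_mul, norm_prod, Real.log_mul (by simp [leadingCoeff_ne_zero.mpr hp])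
    (Finset.prod_ne_zero_iff.mpr habs), Real.log_prod habs]
  congr 1
  apply Finset.sum_congr rfl
  intro b hb
  rw [norm_pow, Real.log_pow, count_roots]

theorem not_both_zero (f : RatFunc ℂ) (a : ℂ) :
    ¬(f.num.eval a = 0 ∧ f.denom.eval a = 0) := by
  rintro ⟨h1, h2⟩
  obtain ⟨u, v, huv⟩ := f.isCoprime_num_denom
  have := congrArg (Polynomial.eval a) huv
  simp [h1, h2] at this

theorem mem_suppF_iff (f : RatFunc ℂ) (hf : f ≠ 0) (a : ℂ) :
    a ∈ suppF f ↔ (f.num.eval a = 0 ∨ f.denom.eval a = 0) := by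
  rw [suppF, Multiset.mem_toFinset, mem_roots
    (mul_ne_zero (RatFunc.num_ne_zero hf) f.denom_ne_zero)]
  simp [IsRoot, eval_mul, mul_eq_zero]

theorem ordAt_ne_zero_iff (f : RatFunc ℂ) (hf : f ≠ 0) (a : ℂ) :
    ordAt f a ≠ 0 ↔ (f.num.eval a = 0 ∨ f.denom.eval a = 0) := by
  constructor
  · intro h
    by_contra hc
    push_neg at hc
    have h1 : rootMultiplicity a f.num = 0 := rootMultiplicity_eq_zero hc.1
    have h2 : rootMultiplicity a f.denom = 0 := rootMultiplicity_eq_zero hc.2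
    simp [ordAt, h1, h2] at h
  · rintro (h | h)
    · have h2 : f.denom.eval a ≠ 0 := fun hc => not_both_zero f a ⟨h, hc⟩
      have h1 : 0 < rootMultiplicity a f.num :=
        (rootMultiplicity_pos (RatFunc.num_ne_zero hf)).mpr h
      have h2' : rootMultiplicity a f.denom = 0 := rootMultiplicity_eq_zero h2
      simp only [ordAt, h2', Nat.cast_zero, sub_zero, ne_eq, Int.natCast_eq_zero]
      omega
    · have h2 : f.num.eval a ≠ 0 := fun hc => not_both_zero f a ⟨hc, h⟩
      have h1 : 0 < rootMultiplicity a f.denom :=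
        (rootMultiplicity_pos f.denom_ne_zero).mpr h
      have h2' : rootMultiplicity a f.num = 0 := rootMultiplicity_eq_zero h2
      simp only [ordAt, h2', Nat.cast_zero, zero_sub, ne_eq, neg_eq_zero, Int.natCast_eq_zero]
      omega

theorem sum_rootMult (p : ℂ[X]) (t : Finset ℂ) (ht : p.roots.toFinset ⊆ t) :
    ∑ a ∈ t, (p.rootMultiplicity a : ℤ) = p.natDegree := by
  rw [← Finset.sum_subset ht (fun x _ hx => by
    rw [← count_roots, Multiset.count_eq_zero_of_notMem
      (fun hm => hx (Multiset.mem_toFinset.mpr hm))]; rfl)]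
  have hcard : p.roots.card = p.natDegree :=
    splits_iff_card_roots.mp (IsAlgClosed.splits p)
  rw [← hcard, ← Multiset.toFinset_sum_count_eq p.roots]
  push_cast
  apply Finset.sum_congr rfl
  intro b _
  rw [count_roots]

theorem roots_num_subset (f : RatFunc ℂ) (hf : f ≠ 0) :
    f.num.roots.toFinset ⊆ suppF f := by
  intro x hx
  rw [suppF, Multiset.mem_toFinset,
    roots_mul (mul_ne_zero (RatFunc.num_ne_zero hf) f.denom_ne_zero)]
  exact Multiset.mem_add.mpr (Or.inl (Multiset.mem_toFinset.mp hx))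

theorem roots_denom_subset (f : RatFunc ℂ) (hf : f ≠ 0) :
    f.denom.roots.toFinset ⊆ suppF f := by
  intro x hx
  rw [suppF, Multiset.mem_toFinset,
    roots_mul (mul_ne_zero (RatFunc.num_ne_zero hf) f.denom_ne_zero)]
  exact Multiset.mem_add.mpr (Or.inr (Multiset.mem_toFinset.mp hx))

theorem sum_ordAt (f : RatFunc ℂ) (hf : f ≠ 0) (hinf : ordInf f = 0) :
    ∑ a ∈ suppF f, ordAt f a = 0 := by
  unfold ordAt
  rw [Finset.sum_sub_distrib, sum_rootMult _ _ (roots_num_subset f hf),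
    sum_rootMult _ _ (roots_denom_subset f hf)]
  unfold ordInf at hinf
  omega

/-- logarithmic expansion of `log |f(a)|` over the zeros and poles of `f`. -/
theorem log_abs_evalAt (f : RatFunc ℂ) (hf : f ≠ 0) (a : ℂ)
    (h1 : f.num.eval a ≠ 0) (h2 : f.denom.eval a ≠ 0) :
    Real.log (‖evalAt f a‖) =
      (Real.log (‖f.num.leadingCoeff‖)
        - Real.log (‖f.denom.leadingCoeff‖))
      + ∑ b ∈ suppF f, (ordAt f b : ℝ) * Real.log (‖a - b‖) := by
  have heval : evalAt f a = f.num.eval a / f.denom.eval a := rfl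
  have hnum := log_abs_eval f.num (RatFunc.num_ne_zero hf) a h1
  have hden := log_abs_eval f.denom f.denom_ne_zero a h2
  have hnum' : Real.log (‖f.num.eval a‖)
      = Real.log (‖f.num.leadingCoeff‖)
      + ∑ b ∈ suppF f, (f.num.rootMultiplicity b : ℝ) * Real.log (‖a - b‖) := by
    rw [hnum]
    congr 1
    exact Finset.sum_subset (roots_num_subset f hf) (fun x _ hx => by
      rw [rootMultiplicity_eq_zero (fun hr => hx (Multiset.mem_toFinset.mpr
        ((mem_roots (RatFunc.num_ne_zero hf)).mpr hr)))]
      simp)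
  have hden' : Real.log (‖f.denom.eval a‖)
      = Real.log (‖f.denom.leadingCoeff‖)
      + ∑ b ∈ suppF f, (f.denom.rootMultiplicity b : ℝ) * Real.log (‖a - b‖) := by
    rw [hden]
    congr 1
    exact Finset.sum_subset (roots_denom_subset f hf) (fun x _ hx => by
      rw [rootMultiplicity_eq_zero (fun hr => hx (Multiset.mem_toFinset.mpr
        ((mem_roots f.denom_ne_zero).mpr hr)))]
      simp)
  have hS : (∑ b ∈ suppF f, (ordAt f b : ℝ) * Real.log (‖a - b‖))
      = (∑ b ∈ suppF f, (f.num.rootMultiplicity b : ℝ) * Real.log (‖a - b‖))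
        - ∑ b ∈ suppF f, (f.denom.rootMultiplicity b : ℝ) * Real.log (‖a - b‖) := by
    rw [← Finset.sum_sub_distrib]
    apply Finset.sum_congr rfl
    intro b _
    unfold ordAt
    push_cast
    ring
  rw [heval, norm_div, Real.log_div (norm_ne_zero_iff.mpr h1)
    (norm_ne_zero_iff.mpr h2), hnum', hden', hS]
  ring

/-- **Logarithmic Weil reciprocity on ℙ¹.** If `f, g ∈ ℂ(z)` are nonzero with
`ord_∞(f) = ord_∞(g) = 0` and no `a ∈ ℂ` is simultaneously a zero or pole of `f` and a
zero or pole of `g`, then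
`∑_{a, ord_a(g) ≠ 0} ord_a(g)·log|f(a)| = ∑_{b, ord_b(f) ≠ 0} ord_b(f)·log|g(b)|`;
both sums are finite and all the evaluations are well-defined nonzero complex numbers. -/
theorem log_weil_reciprocity_disjoint (f g : RatFunc ℂ) (hf : f ≠ 0) (hg : g ≠ 0)
    (hinf_f : ordInf f = 0) (hinf_g : ordInf g = 0)
    (hdisj : ∀ a : ℂ, ¬((f.num.eval a = 0 ∨ f.denom.eval a = 0) ∧
      (g.num.eval a = 0 ∨ g.denom.eval a = 0))) :
    {a : ℂ | ordAt g a ≠ 0}.Finite ∧ {b : ℂ | ordAt f b ≠ 0}.Finite ∧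
    (∀ a : ℂ, ordAt g a ≠ 0 → f.num.eval a ≠ 0 ∧ f.denom.eval a ≠ 0) ∧
    (∀ b : ℂ, ordAt f b ≠ 0 → g.num.eval b ≠ 0 ∧ g.denom.eval b ≠ 0) ∧
    (∑ᶠ (a : ℂ) (_ : ordAt g a ≠ 0),
        (ordAt g a : ℝ) * Real.log (‖evalAt f a‖)) =
      ∑ᶠ (b : ℂ) (_ : ordAt f b ≠ 0),
        (ordAt f b : ℝ) * Real.log (‖evalAt g b‖) := by
  have hSg : ∀ a : ℂ, ordAt g a ≠ 0 ↔ a ∈ suppF g := fun a => by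
    rw [ordAt_ne_zero_iff g hg, mem_suppF_iff g hg]
  have hSf : ∀ a : ℂ, ordAt f a ≠ 0 ↔ a ∈ suppF f := fun a => by
    rw [ordAt_ne_zero_iff f hf, mem_suppF_iff f hf]
  have hfg : ∀ a ∈ suppF g, f.num.eval a ≠ 0 ∧ f.denom.eval a ≠ 0 := by
    intro a ha
    have h := hdisj a
    have hga := (mem_suppF_iff g hg a).mp ha
    constructor <;> intro hc <;> exact h ⟨by tauto, hga⟩
  have hgf : ∀ b ∈ suppF f, g.num.eval b ≠ 0 ∧ g.denom.eval b ≠ 0 := by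
    intro b hb
    have h := hdisj b
    have hfb := (mem_suppF_iff f hf b).mp hb
    constructor <;> intro hc <;> exact h ⟨hfb, by tauto⟩
  refine ⟨?_, ?_, ?_, ?_, ?_⟩
  · exact Set.Finite.subset (suppF g).finite_toSet (fun a ha => (hSg a).mp ha)
  · exact Set.Finite.subset (suppF f).finite_toSet (fun a ha => (hSf a).mp ha)
  · exact fun a ha => hfg a ((hSg a).mp ha)
  · exact fun b hb => hgf b ((hSf b).mp hb)
  · rw [finsum_cond_eq_sum_of_cond_iff _ (fun {a} _ => hSg a),
      finsum_cond_eq_sum_of_cond_iff _ (fun {b} _ => hSf b)]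
    have hL : ∀ a ∈ suppF g,
        (ordAt g a : ℝ) * Real.log (‖evalAt f a‖)
        = (ordAt g a : ℝ) * (Real.log (‖f.num.leadingCoeff‖)
            - Real.log (‖f.denom.leadingCoeff‖))
          + ∑ b ∈ suppF f, (ordAt g a : ℝ) * ((ordAt f b : ℝ)
              * Real.log (‖a - b‖)) := by
      intro a ha
      rw [log_abs_evalAt f hf a (hfg a ha).1 (hfg a ha).2, mul_add, Finset.mul_sum]
    have hR : ∀ b ∈ suppF f,
        (ordAt f b : ℝ) * Real.log (‖evalAt g b‖)
        = (ordAt f b : ℝ) * (Real.log (‖g.num.leadingCoeff‖)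
            - Real.log (‖g.denom.leadingCoeff‖))
          + ∑ a ∈ suppF g, (ordAt f b : ℝ) * ((ordAt g a : ℝ)
              * Real.log (‖b - a‖)) := by
      intro b hb
      rw [log_abs_evalAt g hg b (hgf b hb).1 (hgf b hb).2, mul_add, Finset.mul_sum]
    rw [Finset.sum_congr rfl hL, Finset.sum_congr rfl hR,
      Finset.sum_add_distrib, Finset.sum_add_distrib]
    have hzg : ∑ a ∈ suppF g, (ordAt g a : ℝ)
        * (Real.log (‖f.num.leadingCoeff‖)
          - Real.log (‖f.denom.leadingCoeff‖)) = 0 := by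
      rw [← Finset.sum_mul]
      have : ∑ a ∈ suppF g, (ordAt g a : ℝ) = 0 := by
        have := sum_ordAt g hg hinf_g
        exact_mod_cast congrArg (fun z : ℤ => (z : ℝ)) this
      rw [this, zero_mul]
    have hzf : ∑ b ∈ suppF f, (ordAt f b : ℝ)
        * (Real.log (‖g.num.leadingCoeff‖)
          - Real.log (‖g.denom.leadingCoeff‖)) = 0 := by
      rw [← Finset.sum_mul]
      have : ∑ b ∈ suppF f, (ordAt f b : ℝ) = 0 := by
        have := sum_ordAt f hf hinf_f
        exact_mod_cast congrArg (fun z : ℤ => (z : ℝ)) this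
      rw [this, zero_mul]
    rw [hzg, hzf, zero_add, zero_add, Finset.sum_comm]
    apply Finset.sum_congr rfl
    intro b _
    apply Finset.sum_congr rfl
    intro a _
    rw [norm_sub_rev]
    ring
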